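/- Fix integers n ≥ 1 and 1 ≤ ν ≤ n, a subset C ⊆ {1,…,n} with at least two elements, and j ∈ C with j ≤ ν. Define β : ℂⁿ → ℂⁿ by β(x)_i = x_j·x_i if i ∈ C and i ≠ j, and β(x)_i = x_i otherwise. For (x,ξ) ∈ ℂⁿ×ℂⁿ define ζ(x,ξ) ∈ ℂⁿ by: ζ_j(x,ξ) = Σ_{i∈C, i≤ν} ξ_i + x_j·Σ_{i∈C, i>ν} x_i·ξ_i; ζ_i(x,ξ) = x_j·ξ_i if i ∈ C and i > ν; and ζ_i(x,ξ) = ξ_i otherwise. Then for every x ∈ ℂⁿ with x_i ≠ 0 for all 1 ≤ i ≤ ν, every ξ ∈ ℂⁿ and every v ∈ ℂⁿ, one has Σ_{i=1}^{ν} ξ_i·(Dβ(x)v)_i/β(x)_i + Σ_{i=ν+1}^{n} ξ_i·(Dβ(x)v)_i = Σ_{i=1}^{ν} ζ_i(x,ξ)·v_i/x_i + Σ_{i=ν+1}^{n} ζ_i(x,ξ)·v_i, where Dβ(x) : ℂⁿ → ℂⁿ is the derivative of β at x. -/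

import Mathlib

open Finset

/-- The blow-up chart map `β` along the coordinate subspace `L = {xᵢ = 0 : i ∈ C}`,
in the affine chart associated with the generator `x_j` of the ideal of `L`:
`β(x)ᵢ = x_j·xᵢ` for `i ∈ C`, `i ≠ j`, and `β(x)ᵢ = xᵢ` otherwise. -/
noncomputable def blowUpChart (n : ℕ) (C : Finset (Fin n)) (j : Fin n) :
    (Fin n → ℂ) → (Fin n → ℂ) :=
  fun x i => if i ∈ C ∧ i ≠ j then x j * x i else x i

/-- The new fiber coordinates `ζ` after the blow up:
`ζ_j = ∑_{i∈C, i≤ν} ξᵢ + x_j·∑_{i∈C, i>ν} xᵢ·ξᵢ`, `ζᵢ = x_j·ξᵢ` for `i ∈ C`, `i > ν`,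
and `ζᵢ = ξᵢ` otherwise. -/
noncomputable def blowUpFiber (n ν : ℕ) (C : Finset (Fin n)) (j : Fin n)
    (x ξ : Fin n → ℂ) : Fin n → ℂ :=
  fun i =>
    if i = j then
      (∑ i' ∈ C.filter (fun i' : Fin n => (i' : ℕ) < ν), ξ i') +
        x j * ∑ i' ∈ C.filter (fun i' : Fin n => ν ≤ (i' : ℕ)), x i' * ξ i'
    else if i ∈ C ∧ ν ≤ (i : ℕ) then x j * ξ i
    else ξ i

theorem hder (n : ℕ) (C : Finset (Fin n)) (j : Fin n) (x v : Fin n → ℂ) (i : Fin n) :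
    fderiv ℂ (blowUpChart n C j) x v i =
      if i ∈ C ∧ i ≠ j then v j * x i + x j * v i else v i := by
  have hD : HasFDerivAt (blowUpChart n C j)
      (ContinuousLinearMap.pi fun i : Fin n =>
        if i ∈ C ∧ i ≠ j then
          x j • (ContinuousLinearMap.proj i : (Fin n → ℂ) →L[ℂ] ℂ)
            + x i • (ContinuousLinearMap.proj j : (Fin n → ℂ) →L[ℂ] ℂ)
        else (ContinuousLinearMap.proj i : (Fin n → ℂ) →L[ℂ] ℂ)) x := by
    rw [hasFDerivAt_pi']
    intro i
    by_cases h : i ∈ C ∧ i ≠ j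
    · simp only [blowUpChart, ContinuousLinearMap.proj_pi, if_pos h]
      exact (hasFDerivAt_apply (𝕜 := ℂ) j x).mul (hasFDerivAt_apply (𝕜 := ℂ) i x)
    · simp only [blowUpChart, ContinuousLinearMap.proj_pi, if_neg h]
      exact hasFDerivAt_apply (𝕜 := ℂ) i x
  rw [hD.fderiv, ContinuousLinearMap.pi_apply]
  by_cases h : i ∈ C ∧ i ≠ j <;> simp [h] <;> ring

/-- The pullback under the blow-up chart map of the canonical logarithmic 1-form
`θ = ∑_{i≤ν} ξᵢ dxᵢ/xᵢ + ∑_{i>ν} ξᵢ dxᵢ` is again of canonical logarithmic form in the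
new fiber coordinates `ζ`: for every tangent vector `v`,
`∑_i ξᵢ (Dβ(x)v)ᵢ/β(x)ᵢ = ∑_i ζᵢ vᵢ/xᵢ` (no denominator for `i > ν`). -/
theorem pullback_canonical_one_form (n ν : ℕ) (hn : 1 ≤ n) (hν₁ : 1 ≤ ν) (hν : ν ≤ n)
    (C : Finset (Fin n)) (hC : 2 ≤ C.card) (j : Fin n) (hjC : j ∈ C) (hjν : (j : ℕ) < ν)
    (x : Fin n → ℂ) (hx : ∀ i : Fin n, (i : ℕ) < ν → x i ≠ 0) (ξ v : Fin n → ℂ) :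
    ∑ i : Fin n,
        ξ i * fderiv ℂ (blowUpChart n C j) x v i /
          (if (i : ℕ) < ν then blowUpChart n C j x i else 1)
      = ∑ i : Fin n,
          blowUpFiber n ν C j x ξ i * v i / (if (i : ℕ) < ν then x i else 1) := by
  set A := ∑ i' ∈ C.filter (fun i' : Fin n => (i' : ℕ) < ν), ξ i' with hA
  set B := ∑ i' ∈ C.filter (fun i' : Fin n => ν ≤ (i' : ℕ)), x i' * ξ i' with hB
  have hxj : x j ≠ 0 := hx j hjν
  have key : ∀ i : Fin n,
      ξ i * fderiv ℂ (blowUpChart n C j) x v i /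
          (if (i : ℕ) < ν then blowUpChart n C j x i else 1)
      = blowUpFiber n ν C j x ξ i * v i / (if (i : ℕ) < ν then x i else 1)
        + ((if i ∈ C ∧ i ≠ j ∧ (i : ℕ) < ν then ξ i * (v j / x j) else 0)
          + (if i ∈ C ∧ i ≠ j ∧ ν ≤ (i : ℕ) then (x i * ξ i) * v j else 0)
          + (if i = j then -((A - ξ j) * (v j / x j)) - B * v j else 0)) := by
    intro i
    rw [hder]
    by_cases hij : i = j
    · subst hij
      have hcc : blowUpChart n C i x i = x i := by simp [blowUpChart]
      rw [hcc, if_neg (by simp : ¬(i ∈ C ∧ i ≠ i)), if_pos hjν,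
        if_neg (by simp : ¬(i ∈ C ∧ i ≠ i ∧ (i : ℕ) < ν)),
        if_neg (by simp : ¬(i ∈ C ∧ i ≠ i ∧ ν ≤ (i : ℕ))), if_pos rfl]
      simp only [blowUpFiber, if_pos rfl, ↓reduceIte, ← hA, ← hB]
      field_simp
      ring
    · by_cases hiC : i ∈ C
      · by_cases hiν : (i : ℕ) < ν
        · have hxi := hx i hiν
          simp only [blowUpChart, blowUpFiber, if_pos hiν, if_neg hij,
            if_pos (⟨hiC, hij⟩ : i ∈ C ∧ i ≠ j),
            if_neg (by simp [hij, not_le.mpr hiν] : ¬(i ∈ C ∧ ν ≤ (i : ℕ))),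
            if_pos (⟨hiC, hij, hiν⟩ : i ∈ C ∧ i ≠ j ∧ (i : ℕ) < ν),
            if_neg (by simp [not_le.mpr hiν] : ¬(i ∈ C ∧ i ≠ j ∧ ν ≤ (i : ℕ)))]
          field_simp
          ring
        · have hiν' : ν ≤ (i : ℕ) := not_lt.mp hiν
          simp only [blowUpChart, blowUpFiber, if_neg hiν, if_neg hij,
            if_pos (⟨hiC, hij⟩ : i ∈ C ∧ i ≠ j),
            if_pos (⟨hiC, hiν'⟩ : i ∈ C ∧ ν ≤ (i : ℕ)),
            if_neg (by simp [hiν] : ¬(i ∈ C ∧ i ≠ j ∧ (i : ℕ) < ν)),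
            if_pos (⟨hiC, hij, hiν'⟩ : i ∈ C ∧ i ≠ j ∧ ν ≤ (i : ℕ))]
          ring
      · simp only [blowUpChart, blowUpFiber, if_neg hij,
          if_neg (fun h => hiC h.1 : ¬(i ∈ C ∧ i ≠ j)),
          if_neg (fun h => hiC h.1 : ¬(i ∈ C ∧ ν ≤ (i : ℕ))),
          if_neg (fun h => hiC h.1 : ¬(i ∈ C ∧ i ≠ j ∧ (i : ℕ) < ν)),
          if_neg (fun h => hiC h.1 : ¬(i ∈ C ∧ i ≠ j ∧ ν ≤ (i : ℕ)))]
        ring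
  rw [Finset.sum_congr rfl fun i _ => key i, Finset.sum_add_distrib,
    Finset.sum_add_distrib, Finset.sum_add_distrib]
  have h3 : ∑ i : Fin n, (if i = j then -((A - ξ j) * (v j / x j)) - B * v j else 0)
      = -((A - ξ j) * (v j / x j)) - B * v j := by
    rw [Finset.sum_ite_eq' Finset.univ j]
    simp
  have h1 : ∑ i : Fin n, (if i ∈ C ∧ i ≠ j ∧ (i : ℕ) < ν then ξ i * (v j / x j) else 0)
      = (A - ξ j) * (v j / x j) := by
    rw [Finset.sum_ite, Finset.sum_const_zero, add_zero, ← Finset.sum_mul]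
    congr 1
    have hset : Finset.univ.filter (fun i : Fin n => i ∈ C ∧ i ≠ j ∧ (i : ℕ) < ν)
        = (C.filter (fun i' : Fin n => (i' : ℕ) < ν)).erase j := by
      ext i
      simp only [Finset.mem_filter, Finset.mem_univ, true_and, Finset.mem_erase, ne_eq]
      tauto
    rw [hset, Finset.sum_erase_eq_sub (by simp [Finset.mem_filter, hjC, hjν])]
  have h2 : ∑ i : Fin n, (if i ∈ C ∧ i ≠ j ∧ ν ≤ (i : ℕ) then (x i * ξ i) * v j else 0)
      = B * v j := by
    rw [Finset.sum_ite, Finset.sum_const_zero, add_zero, ← Finset.sum_mul]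
    congr 1
    have hset : Finset.univ.filter (fun i : Fin n => i ∈ C ∧ i ≠ j ∧ ν ≤ (i : ℕ))
        = C.filter (fun i' : Fin n => ν ≤ (i' : ℕ)) := by
      ext i
      simp only [Finset.mem_filter, Finset.mem_univ, true_and]
      constructor
      · rintro ⟨h₁, _, h₃⟩; exact ⟨h₁, h₃⟩
      · rintro ⟨h₁, h₃⟩
        exact ⟨h₁, fun he => absurd h₃ (by simp [he, not_le.mpr hjν]), h₃⟩
    rw [hset]
  rw [h1, h2, h3]
  ring
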